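/- For each δ ∈ {∃, weak, full}: every discrete META A with a distinguished location lf can be effectively extended to a discrete META A' — obtained by adding a fresh private location reachable from the initial location with unguarded self-loops incrementing each energy variable, a fresh location l1 reachable from lf with self-loops incrementing and decrementing each energy variable, and a fresh final location reachable without guard from both the private location and l1 — such that A' is δ-EN-opaque if and only if lf is reachable in A. Hence reachability in discrete METAs reduces to δ-EN-opacity. -/

import Mathlib

namespace METAOpacity

open scoped Classical

/-- An inequality `v ⋈ d`: a variable index (clocks first, then energy variables),
a comparison code (`0` = `<`, `1` = `≤`, `2` = `≥`, `3` = `>`) and an integer constant. -/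
abbrev Ineq : Type := ℕ × ℕ × ℤ

/-- An edge: source location, guard, action (`none` = ε), clock resets,
integer energy updates, target location. -/
abbrev Edge : Type := ℕ × List Ineq × Option ℕ × List ℕ × List ℤ × ℕ

/-- A finitely presented guarded multi-energy timed automaton (guarded META):
number of actions, number of locations (location `0` is the initial one), number of
clocks, number of energy variables, list of private locations, list of final locations,
invariants (one per location), integer energy rates (one list per location, one entry per
energy variable), and edges.  Being a nested product of countable discrete data, this
type is `Primcodable`, so computability of functions on it makes sense. -/
abbrev GMETA : Type :=
  ℕ × ℕ × ℕ × ℕ × List ℕ × List ℕ × List (List Ineq) × List (List ℤ) × List Edge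

def numAct (A : GMETA) : ℕ := A.1
def numLoc (A : GMETA) : ℕ := A.2.1
def numClk (A : GMETA) : ℕ := A.2.2.1
def numEn (A : GMETA) : ℕ := A.2.2.2.1
def privLocs (A : GMETA) : List ℕ := A.2.2.2.2.1
def finalLocs (A : GMETA) : List ℕ := A.2.2.2.2.2.1
def invs (A : GMETA) : List (List Ineq) := A.2.2.2.2.2.2.1
def rates (A : GMETA) : List (List ℤ) := A.2.2.2.2.2.2.2.1
def edges (A : GMETA) : List Edge := A.2.2.2.2.2.2.2.2

def edgeSrc (e : Edge) : ℕ := e.1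
def edgeGuard (e : Edge) : List Ineq := e.2.1
def edgeAct (e : Edge) : Option ℕ := e.2.2.1
def edgeResets (e : Edge) : List ℕ := e.2.2.2.1
def edgeUpdates (e : Edge) : List ℤ := e.2.2.2.2.1
def edgeTgt (e : Edge) : ℕ := e.2.2.2.2.2

/-- A semantic state: location, clock valuation, energy valuation. -/
abbrev EState : Type := ℕ × (ℕ → ℝ) × (ℕ → ℝ)

def initState : EState := (0, fun _ => 0, fun _ => 0)

/-- Satisfaction of a single comparison. -/
def cmpSat (c : ℕ) (x : ℝ) (d : ℤ) : Prop :=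
  if c = 0 then x < (d : ℝ)
  else if c = 1 then x ≤ (d : ℝ)
  else if c = 2 then (d : ℝ) ≤ x
  else if c = 3 then (d : ℝ) < x
  else False

/-- Value of variable `i` (a clock if `i < numClk A`, an energy variable otherwise). -/
def varVal (A : GMETA) (w v : ℕ → ℝ) (i : ℕ) : ℝ :=
  if i < numClk A then w i else v (i - numClk A)

/-- Satisfaction of a conjunction of inequalities. -/
def satIneqs (A : GMETA) (w v : ℕ → ℝ) (g : List Ineq) : Prop :=
  ∀ q ∈ g, cmpSat q.2.1 (varVal A w v q.1) q.2.2

def invOf (A : GMETA) (l : ℕ) : List Ineq := (invs A).getD l []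

def rateOf (A : GMETA) (l i : ℕ) : ℤ := ((rates A).getD l []).getD i 0

/-- A state is valid when its location exists, clocks and energies are non-negative,
and the invariant of the current location holds. -/
def validState (A : GMETA) (s : EState) : Prop :=
  s.1 < numLoc A ∧ (∀ i, 0 ≤ s.2.1 i) ∧ (∀ i, 0 ≤ s.2.2 i) ∧
    satIneqs A s.2.1 s.2.2 (invOf A s.1)

def elapseClocks (w : ℕ → ℝ) (t : ℝ) : ℕ → ℝ := fun i => w i + t

def elapseEnergies (A : GMETA) (l : ℕ) (v : ℕ → ℝ) (t : ℝ) : ℕ → ℝ :=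
  fun i => v i + (rateOf A l i : ℝ) * t

def resetClocks (R : List ℕ) (w : ℕ → ℝ) : ℕ → ℝ := fun i => if i ∈ R then 0 else w i

def updateEnergies (U : List ℤ) (v : ℕ → ℝ) : ℕ → ℝ := fun i => v i + ((U.getD i 0 : ℤ) : ℝ)

/-- Timestamped traces of a guarded META, written in *reverse* chronological order
(the head of the list is the last state together with its absolute time).  Each step
consists of a delay (during which all intermediate states must be valid) followed by
the firing of an edge whose guard holds. -/
inductive Trace (A : GMETA) : List (EState × ℝ) → Prop where
  | init :
      validState A initState →
      Trace A [(initState, 0)]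
  | step {tr : List (EState × ℝ)} {l : ℕ} {w v : ℕ → ℝ} {τ : ℝ} (t : ℝ) (e : Edge) :
      Trace A (((l, w, v), τ) :: tr) →
      0 ≤ t →
      (∀ t', 0 ≤ t' → t' ≤ t →
        validState A (l, elapseClocks w t', elapseEnergies A l v t')) →
      e ∈ edges A →
      edgeSrc e = l →
      satIneqs A (elapseClocks w t) (elapseEnergies A l v t) (edgeGuard e) →
      validState A (edgeTgt e, resetClocks (edgeResets e) (elapseClocks w t),
        updateEnergies (edgeUpdates e) (elapseEnergies A l v t)) →
      Trace A (((edgeTgt e, resetClocks (edgeResets e) (elapseClocks w t),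
        updateEnergies (edgeUpdates e) (elapseEnergies A l v t)), τ + t)
          :: ((l, w, v), τ) :: tr)

/-- Duration of a run (absolute time of its last state). -/
def runDur (tr : List (EState × ℝ)) : ℝ := tr.headI.2

/-- Last location of a run. -/
def runLoc (tr : List (EState × ℝ)) : ℕ := tr.headI.1.1

/-- Final energies of a run. -/
def runEnergy (tr : List (EState × ℝ)) : ℕ → ℝ := tr.headI.1.2.2

/-- A private run: reaches a final location after having visited a private location. -/
def PrivRun (A : GMETA) (tr : List (EState × ℝ)) : Prop :=
  Trace A tr ∧ runLoc tr ∈ finalLocs A ∧ ∃ p ∈ tr, p.1.1 ∈ privLocs A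

/-- A public run: reaches a final location without ever visiting a private location. -/
def PubRun (A : GMETA) (tr : List (EState × ℝ)) : Prop :=
  Trace A tr ∧ runLoc tr ∈ finalLocs A ∧ ∀ p ∈ tr, p.1.1 ∉ privLocs A

/-- Final energies of private runs. -/
def EVpriv (A : GMETA) : Set (ℕ → ℝ) := {v | ∃ tr, PrivRun A tr ∧ runEnergy tr = v}

/-- Final energies of public runs. -/
def EVpub (A : GMETA) : Set (ℕ → ℝ) := {v | ∃ tr, PubRun A tr ∧ runEnergy tr = v}

/-- Durations of private runs. -/
def DTpriv (A : GMETA) : Set ℝ := {d | ∃ tr, PrivRun A tr ∧ runDur tr = d}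

/-- Durations of public runs. -/
def DTpub (A : GMETA) : Set ℝ := {d | ∃ tr, PubRun A tr ∧ runDur tr = d}

/-- Pairs (duration, final energies) of private runs. -/
def DEVpriv (A : GMETA) : Set (ℝ × (ℕ → ℝ)) :=
  {p | ∃ tr, PrivRun A tr ∧ runDur tr = p.1 ∧ runEnergy tr = p.2}

/-- Pairs (duration, final energies) of public runs. -/
def DEVpub (A : GMETA) : Set (ℝ × (ℕ → ℝ)) :=
  {p | ∃ tr, PubRun A tr ∧ runDur tr = p.1 ∧ runEnergy tr = p.2}

/-- The three variants of opacity: existential, weak, full. -/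
inductive Var3 where
  | ex : Var3
  | weak : Var3
  | full : Var3

/-- δ-EN-opacity. -/
def ENOpaque : Var3 → GMETA → Prop
  | .ex, A => (EVpriv A ∩ EVpub A).Nonempty
  | .weak, A => EVpriv A ⊆ EVpub A
  | .full, A => EVpriv A = EVpub A

/-- δ-ET-EN-opacity. -/
def ETENOpaque : Var3 → GMETA → Prop
  | .ex, A => (DEVpriv A ∩ DEVpub A).Nonempty
  | .weak, A => DEVpriv A ⊆ DEVpub A
  | .full, A => DEVpriv A = DEVpub A

/-- The two observation kinds: final energies only (EN), or duration and final
energies (ET-EN). -/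
inductive Sig2 where
  | en : Sig2
  | eten : Sig2

/-- δ-σ-opacity. -/
def Opq : Var3 → Sig2 → GMETA → Prop
  | δ, .en, A => ENOpaque δ A
  | δ, .eten, A => ETENOpaque δ A

/-- Energy level of a (reverse chronological) run at absolute time `t`: the energy
valuation of the last state reached at absolute time at most `t` (the zero valuation
if there is no such state). -/
noncomputable def ELat : List (EState × ℝ) → ℝ → (ℕ → ℝ)
  | [], _ => fun _ => 0
  | p :: rest, t => if p.2 ≤ t then p.1.2.2 else ELat rest t

/-- Discrete energy observation: energy levels at times `1, …, ⌈duration⌉`. -/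
noncomputable def DEO (tr : List (EState × ℝ)) : List (ℕ → ℝ) :=
  (List.range (Nat.ceil (runDur tr))).map (fun k => ELat tr ((k : ℝ) + 1))

/-- δ-DE-opacity. -/
def DEOpaque : Var3 → GMETA → Prop
  | .ex, A => ∃ tr tr', PrivRun A tr ∧ PubRun A tr' ∧ DEO tr = DEO tr'
  | .weak, A => ∀ tr, PrivRun A tr → ∃ tr', PubRun A tr' ∧ DEO tr = DEO tr'
  | .full, A => (∀ tr, PrivRun A tr → ∃ tr', PubRun A tr' ∧ DEO tr = DEO tr') ∧
      (∀ tr, PubRun A tr → ∃ tr', PrivRun A tr' ∧ DEO tr' = DEO tr)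

/-- Keeps, from a chronological sequence of timestamped energy valuations, exactly the
valuations that change at least one energy variable (w.r.t.\ the previous valuation,
given as first argument). -/
noncomputable def energyChangesAux : (ℕ → ℝ) → List ((ℕ → ℝ) × ℝ) → List ((ℕ → ℝ) × ℝ)
  | _, [] => []
  | prev, p :: rest =>
      if p.1 = prev then energyChangesAux prev rest else p :: energyChangesAux p.1 rest

/-- Timestamped energy changes of a run, in chronological order. -/
noncomputable def energyChanges (tr : List (EState × ℝ)) : List ((ℕ → ℝ) × ℝ) :=
  energyChangesAux (fun _ => 0) (tr.reverse.map (fun p => (p.1.2.2, p.2)))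

/-- Buffered energy level at integer time `τ ≥ 1`: the sequence of successive energy
valuations taken at absolute timestamps in `(τ − 1, τ]` (in `[0, 1]` for `τ = 1`),
keeping only the valuations that change at least one energy variable. -/
noncomputable def bEL (tr : List (EState × ℝ)) (τ : ℕ) : List (ℕ → ℝ) :=
  ((energyChanges tr).filter
    (fun p => decide ((τ = 1 ∨ (τ : ℝ) - 1 < p.2) ∧ p.2 ≤ (τ : ℝ)))).map Prod.fst

/-- Buffered discrete energy observation: `bEL` at times `1, …, ⌈duration⌉`. -/
noncomputable def bDEO (tr : List (EState × ℝ)) : List (List (ℕ → ℝ)) :=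
  (List.range (Nat.ceil (runDur tr))).map (fun k => bEL tr (k + 1))

/-- δ-bDE-opacity. -/
def bDEOpaque : Var3 → GMETA → Prop
  | .ex, A => ∃ tr tr', PrivRun A tr ∧ PubRun A tr' ∧ bDEO tr = bDEO tr'
  | .weak, A => ∀ tr, PrivRun A tr → ∃ tr', PubRun A tr' ∧ bDEO tr = bDEO tr'
  | .full, A => (∀ tr, PrivRun A tr → ∃ tr', PubRun A tr' ∧ bDEO tr = bDEO tr') ∧
      (∀ tr, PubRun A tr → ∃ tr', PrivRun A tr' ∧ bDEO tr' = bDEO tr)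

/-- Basic well-formedness of the presentation: the initial location exists, private and
final locations are non-empty sets of locations, final locations are not private and
have no outgoing edge, invariant and rate lists have the right lengths, and all indices
are in range. -/
def WellFormed (A : GMETA) : Prop :=
  0 < numLoc A ∧
  privLocs A ≠ [] ∧
  finalLocs A ≠ [] ∧
  (∀ l ∈ privLocs A, l < numLoc A) ∧
  (∀ l ∈ finalLocs A, l < numLoc A ∧ l ∉ privLocs A) ∧
  (invs A).length = numLoc A ∧
  (∀ g ∈ invs A, ∀ q ∈ g, q.1 < numClk A + numEn A) ∧
  (rates A).length = numLoc A ∧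
  (∀ r ∈ rates A, r.length = numEn A) ∧
  (∀ e ∈ edges A, edgeSrc e < numLoc A ∧ edgeTgt e < numLoc A ∧
    edgeSrc e ∉ finalLocs A ∧
    (∀ a, edgeAct e = some a → a < numAct A) ∧
    (∀ q ∈ edgeGuard e, q.1 < numClk A + numEn A) ∧
    (∀ x ∈ edgeResets e, x < numClk A) ∧
    (edgeUpdates e).length = numEn A)

/-- Discrete: all energy rates are `0` (energy changes only via edge updates). -/
def Discrete (A : GMETA) : Prop := ∀ r ∈ rates A, ∀ z ∈ r, z = 0

/-- Positive: all energy rates and all energy updates are non-negative. -/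
def Positive (A : GMETA) : Prop :=
  (∀ r ∈ rates A, ∀ z ∈ r, 0 ≤ z) ∧ ∀ e ∈ edges A, ∀ z ∈ edgeUpdates e, 0 ≤ z

/-- META (as opposed to *guarded* META): guards and invariants constrain clocks only. -/
def ClockGuardsOnly (A : GMETA) : Prop :=
  (∀ g ∈ invs A, ∀ q ∈ g, q.1 < numClk A) ∧
    ∀ e ∈ edges A, ∀ q ∈ edgeGuard e, q.1 < numClk A

/-- Integer-switching: along every run, any edge whose target location has a different
energy rate than its source (for some energy variable) is taken at an integer absolute
time. -/
def IntegerSwitching (A : GMETA) : Prop :=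
  ∀ (s' : EState) (τ' : ℝ) (s : EState) (τ : ℝ) (rest : List (EState × ℝ)),
    Trace A ((s', τ') :: (s, τ) :: rest) →
    (∃ i < numEn A, rateOf A s.1 i ≠ rateOf A s'.1 i) →
    ∃ n : ℕ, τ' = (n : ℝ)

/-- Integer execution-time: every run reaching a final location has integer duration. -/
def IntegerET (A : GMETA) : Prop :=
  ∀ tr, Trace A tr → runLoc tr ∈ finalLocs A → ∃ n : ℕ, runDur tr = (n : ℝ)

/-- Some run of `A` reaches a state with location `l`. -/
def ReachLoc (A : GMETA) (l : ℕ) : Prop :=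
  ∃ tr p, Trace A tr ∧ p ∈ tr ∧ p.1.1 = l

/-- Some run of `A` of duration exactly `T` ends in location `l`. -/
def ReachLocInTime (A : GMETA) (l : ℕ) (T : ℕ) : Prop :=
  ∃ tr, Trace A tr ∧ runLoc tr = l ∧ runDur tr = (T : ℝ)

/-- A problem `P` over guarded METAs is decidable on the class `C` when some computable
(Boolean-valued, hence total) function decides it on every automaton of the class. -/
def DecidableOn (C P : GMETA → Prop) : Prop :=
  ∃ f : GMETA → Bool, Computable f ∧ ∀ A, C A → (f A = true ↔ P A)


/-! ### Space-bounded decidability, via Turing machines -/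

/-- Binary presentation of a guarded META on the tape alphabet `Option Bool`. -/
def tapeInput (A : GMETA) : List (Option Bool) := (Nat.bits (Encodable.encode A)).map some

/-- One-step relation of a (deterministic) Turing machine. -/
def TMStep {Λ : Type} [Inhabited Λ]
    (M : Turing.TM0.Machine (Option Bool) Λ) (a b : Turing.TM0.Cfg (Option Bool) Λ) : Prop :=
  Turing.TM0.step M a = some b

/-- `P` is decided on the class `C` by a Turing machine using at most `S n` tape cells
on inputs of length `n`: on every input of the class the machine halts, the halting
configuration reads `some true` at the head iff `P` holds, and every reachable
configuration is blank except within distance `S n` of the head. -/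
def DecidesInSpace (S : ℕ → ℕ) (C P : GMETA → Prop) : Prop :=
  ∃ (Λ : Type) (_ : Inhabited Λ) (_ : Fintype Λ),
  ∃ M : Turing.TM0.Machine (Option Bool) Λ,
    ∀ A : GMETA, C A →
      (∃ c, Relation.ReflTransGen (TMStep M) (Turing.TM0.init (tapeInput A)) c ∧
        Turing.TM0.step M c = none ∧ (c.Tape.head = some true ↔ P A)) ∧
      ∀ c, Relation.ReflTransGen (TMStep M) (Turing.TM0.init (tapeInput A)) c →
        ∀ i : ℤ, (S (tapeInput A).length : ℤ) < |i| → c.Tape.nth i = none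

/-- Membership in `EXPSPACE`, relative to the class `C`. -/
def InEXPSPACEOn (C P : GMETA → Prop) : Prop :=
  ∃ k : ℕ, DecidesInSpace (fun n => 2 ^ (n ^ k + k)) C P

/-- Membership in `2EXPSPACE`, relative to the class `C`. -/
def In2EXPSPACEOn (C P : GMETA → Prop) : Prop :=
  ∃ k : ℕ, DecidesInSpace (fun n => 2 ^ 2 ^ (n ^ k + k)) C P

/-- Membership in `3EXPSPACE`, relative to the class `C`. -/
def In3EXPSPACEOn (C P : GMETA → Prop) : Prop :=
  ∃ k : ℕ, DecidesInSpace (fun n => 2 ^ 2 ^ 2 ^ (n ^ k + k)) C P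

section Reduction

variable (A : GMETA) (lf : ℕ)

def zvec : List ℤ := List.replicate (numEn A) 0

def unitU (i : ℕ) (c : ℤ) : List ℤ :=
  List.replicate i 0 ++ c :: List.replicate (numEn A - (i + 1)) 0

def shiftE (e : Edge) : Edge :=
  (e.1 + 1, e.2.1, e.2.2.1, e.2.2.2.1, e.2.2.2.2.1, e.2.2.2.2.2 + 1)

def eStart : Edge := (0, [], none, List.range (numClk A), zvec A, 1)
def ePrv : Edge := (0, [], none, [], zvec A, numLoc A + 1)
def ePrv2 : Edge := (numLoc A + 1, [], none, [], zvec A, numLoc A + 2)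
def eFin : Edge := (lf + 1, [], none, [], zvec A, numLoc A + 2)
def eEnd : Edge := (numLoc A + 2, [], none, [], zvec A, numLoc A + 3)
def loopE (i : ℕ) (c : ℤ) : Edge := (numLoc A + 2, [], none, [], unitU A i c, numLoc A + 2)

def build : GMETA :=
  (numAct A, numLoc A + 4, numClk A, numEn A, [numLoc A + 1], [numLoc A + 3],
   [] :: invs A ++ [[], [], []],
   zvec A :: rates A ++ [zvec A, zvec A, zvec A],
   (edges A).map (shiftE) ++
     [eStart A, ePrv A, ePrv2 A, eFin A lf, eEnd A] ++
     (List.range (numEn A)).flatMap (fun i => [loopE A i 1, loopE A i (-1)]))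

@[simp] theorem numAct_build : numAct (build A lf) = numAct A := rfl
@[simp] theorem numLoc_build : numLoc (build A lf) = numLoc A + 4 := rfl
@[simp] theorem numClk_build : numClk (build A lf) = numClk A := rfl
@[simp] theorem numEn_build : numEn (build A lf) = numEn A := rfl
@[simp] theorem privLocs_build : privLocs (build A lf) = [numLoc A + 1] := rfl
@[simp] theorem finalLocs_build : finalLocs (build A lf) = [numLoc A + 3] := rfl
@[simp] theorem invs_build : invs (build A lf) = [] :: invs A ++ [[], [], []] := rfl
@[simp] theorem rates_build :
    rates (build A lf) = zvec A :: rates A ++ [zvec A, zvec A, zvec A] := rfl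
@[simp] theorem edges_build :
    edges (build A lf) = (edges A).map (shiftE) ++
      [eStart A, ePrv A, ePrv2 A, eFin A lf, eEnd A] ++
      (List.range (numEn A)).flatMap (fun i => [loopE A i 1, loopE A i (-1)]) := rfl

@[simp] theorem zvec_getD (i : ℕ) : (zvec A).getD i 0 = 0 := by
  unfold zvec
  rcases lt_or_ge i (numEn A) with h | h
  · rw [List.getD_eq_getElem _ _ (by simpa using h)]; simp
  · exact List.getD_eq_default _ _ (by simpa using h)

@[simp] theorem zvec_length : (zvec A).length = numEn A := by simp [zvec]

theorem unitU_length {i : ℕ} (h : i < numEn A) : (unitU A i c).length = numEn A := by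
  simp [unitU]; omega

theorem unitU_getD (i : ℕ) (c : ℤ) (j : ℕ) :
    (unitU A i c).getD j 0 = if j = i then c else 0 := by
  unfold unitU
  rcases lt_trichotomy j i with h | h | h
  · rw [List.getD_append _ _ _ _ (by simpa using h), if_neg (by omega)]
    rw [List.getD_eq_getElem _ _ (by simpa using h)]; simp
  · subst h
    rw [List.getD_append_right _ _ _ _ (by simp)]
    simp
  · rw [List.getD_append_right _ _ _ _ (by simp; omega), if_neg (by omega)]
    have : j - (List.replicate i (0:ℤ)).length = (j - i - 1) + 1 := by simp; omega
    rw [this, List.getD_cons_succ]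
    rcases lt_or_ge (j - i - 1) (numEn A - (i+1)) with h' | h'
    · rw [List.getD_eq_getElem _ _ (by simpa using h')]; simp
    · exact List.getD_eq_default _ _ (by simpa using h')

end Reduction
section TraceLemmas

variable {B : GMETA}

theorem Trace.ne_nil {tr} (h : Trace B tr) : tr ≠ [] := by
  cases h <;> simp

theorem trace_head_valid {s : EState} {τ : ℝ} {rest} (h : Trace B ((s, τ) :: rest)) :
    validState B s := by
  cases h with
  | init h0 => exact h0
  | step t e htr ht0 hmid hmem hsrc hg hval => exact hval

theorem trace_mem {tr} (h : Trace B tr) {p} (hp : p ∈ tr) : ∃ rest, Trace B (p :: rest) := by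
  induction h with
  | init h0 => rcases List.mem_singleton.1 hp with rfl; exact ⟨[], .init h0⟩
  | step t e htr ht0 hmid hmem hsrc hg hval ih =>
    rcases List.mem_cons.1 hp with rfl | hp
    · exact ⟨_, .step t e htr ht0 hmid hmem hsrc hg hval⟩
    · exact ih hp

theorem trace_loc_lt {tr} (h : Trace B tr) {p} (hp : p ∈ tr) : p.1.1 < numLoc B := by
  obtain ⟨rest, h'⟩ := trace_mem h hp
  exact (trace_head_valid h').1

theorem discrete_rateOf (hD : Discrete B) (l i : ℕ) : rateOf B l i = 0 := by
  unfold rateOf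
  rcases lt_or_ge l (rates B).length with hl | hl
  · rcases lt_or_ge i ((rates B).getD l []).length with hi | hi
    · rw [List.getD_eq_getElem _ _ hi]
      refine hD _ ?_ _ (List.getElem_mem hi)
      rw [List.getD_eq_getElem _ _ hl]
      exact List.getElem_mem hl
    · exact List.getD_eq_default _ _ hi
  · rw [List.getD_eq_default _ _ hl]; rfl

theorem elapseEnergies_discrete (hD : Discrete B) (l : ℕ) (v : ℕ → ℝ) (t : ℝ) :
    elapseEnergies B l v t = v := by
  funext i; simp [elapseEnergies, discrete_rateOf hD]

@[simp] theorem elapseClocks_zero (w : ℕ → ℝ) : elapseClocks w 0 = w := by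
  funext i; simp [elapseClocks]

@[simp] theorem resetClocks_nil (w : ℕ → ℝ) : resetClocks [] w = w := by
  funext i; simp [resetClocks]

theorem updateEnergies_apply (U : List ℤ) (v : ℕ → ℝ) (i : ℕ) :
    updateEnergies U v i = v i + ((U.getD i 0 : ℤ) : ℝ) := rfl

theorem updateEnergies_zvec (A : GMETA) (v : ℕ → ℝ) : updateEnergies (zvec A) v = v := by
  funext i; rw [updateEnergies_apply, zvec_getD]; simp

/-- Integrality of energies for discrete automata with full-length updates. -/
theorem energies_nat (hU : ∀ e ∈ edges B, (edgeUpdates e).length = numEn B)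
    (hD : Discrete B) {tr} (h : Trace B tr) :
    ∀ p ∈ tr, (∀ i, ∃ k : ℕ, p.1.2.2 i = (k : ℝ)) ∧ ∀ i, numEn B ≤ i → p.1.2.2 i = 0 := by
  induction h with
  | init h0 =>
    intro p hp
    rcases List.mem_singleton.1 hp with rfl
    exact ⟨fun i => ⟨0, by simp [initState]⟩, fun i _ => rfl⟩
  | step t e htr ht0 hmid hmem hsrc hg hval ih =>
    intro p hp
    rcases List.mem_cons.1 hp with rfl | hp
    · have hprev := (ih _ (List.mem_cons_self)).1
      rw [elapseEnergies_discrete hD] at hval ⊢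
      constructor
      · intro i
        obtain ⟨k, hk⟩ := hprev i
        dsimp only at hk ⊢
        have hnn : (0:ℝ) ≤ updateEnergies (edgeUpdates e) _ i := hval.2.2.1 i
        rw [updateEnergies_apply, hk] at hnn ⊢
        have : (0:ℤ) ≤ (k : ℤ) + (edgeUpdates e).getD i 0 := by
          have : ((((k : ℤ) + (edgeUpdates e).getD i 0 : ℤ)) : ℝ) ≥ 0 := by push_cast; linarith
          exact_mod_cast this
        refine ⟨((k : ℤ) + (edgeUpdates e).getD i 0).toNat, ?_⟩
        rw [show ((((k : ℤ) + (edgeUpdates e).getD i 0).toNat : ℕ) : ℝ)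
            = ((((k : ℤ) + (edgeUpdates e).getD i 0).toNat : ℤ) : ℝ) by norm_cast,
          Int.toNat_of_nonneg this]
        push_cast; ring
      · intro i hi
        dsimp only
        have h0 := (ih _ (List.mem_cons_self)).2 i hi
        dsimp only at h0
        rw [updateEnergies_apply, h0,
          List.getD_eq_default _ _ (by rw [hU e hmem]; exact hi)]
        simp
    · exact ih _ hp

theorem varVal_congr {B B' : GMETA} (hC : numClk B' = numClk B) {w w' v v' : ℕ → ℝ}
    (hw : ∀ i < numClk B, w' i = w i) (hv : ∀ i, v' i = v i) (i : ℕ) :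
    varVal B' w' v' i = varVal B w v i := by
  unfold varVal
  rw [hC]
  split
  · exact hw i ‹_›
  · exact hv _

theorem satIneqs_congr {B B' : GMETA} (hC : numClk B' = numClk B) {w w' v v' : ℕ → ℝ}
    (hw : ∀ i < numClk B, w' i = w i) (hv : ∀ i, v' i = v i) (g : List Ineq) :
    satIneqs B' w' v' g ↔ satIneqs B w v g := by
  unfold satIneqs
  refine forall₂_congr fun q hq => ?_
  rw [varVal_congr hC hw hv]

end TraceLemmas
section BuildFacts

variable {A : GMETA} {lf : ℕ}

theorem mem_rates_build {r} (hr : r ∈ rates (build A lf)) :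
    r = zvec A ∨ r ∈ rates A := by
  simp only [rates_build, List.cons_append, List.mem_cons, List.mem_append] at hr
  rcases hr with rfl | hr
  · exact Or.inl rfl
  · rcases hr with hr | hr
    · exact Or.inr hr
    · simp only [List.mem_cons, List.not_mem_nil, or_false] at hr
      rcases hr with rfl | rfl | rfl <;> exact Or.inl rfl

theorem mem_invs_build {g} (hg : g ∈ invs (build A lf)) :
    g = [] ∨ g ∈ invs A := by
  simp only [invs_build, List.cons_append, List.mem_cons, List.mem_append] at hg
  rcases hg with rfl | hg
  · exact Or.inl rfl
  · rcases hg with hg | hg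
    · exact Or.inr hg
    · simp only [List.mem_cons, List.not_mem_nil, or_false] at hg
      rcases hg with rfl | rfl | rfl <;> exact Or.inl rfl

theorem mem_edges_build {e} (he : e ∈ edges (build A lf)) :
    (∃ e0 ∈ edges A, e = shiftE e0) ∨
    e = eStart A ∨ e = ePrv A ∨ e = ePrv2 A ∨ e = eFin A lf ∨ e = eEnd A ∨
    ∃ i < numEn A, e = loopE A i 1 ∨ e = loopE A i (-1) := by
  simp only [edges_build, List.mem_append, List.mem_flatMap, List.mem_range,
    List.mem_cons, List.not_mem_nil, or_false, List.mem_map] at he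
  rcases he with (he | he) | he
  · obtain ⟨e0, he0, rfl⟩ := he
    exact Or.inl ⟨e0, he0, rfl⟩
  · tauto
  · obtain ⟨i, hi, he⟩ := he
    exact Or.inr (Or.inr (Or.inr (Or.inr (Or.inr (Or.inr ⟨i, hi, he⟩)))))

theorem discrete_build (hD : Discrete A) : Discrete (build A lf) := by
  intro r hr z hz
  rcases mem_rates_build hr with rfl | hr
  · exact List.eq_of_mem_replicate hz
  · exact hD r hr z hz

theorem cgo_build (hCG : ClockGuardsOnly A) : ClockGuardsOnly (build A lf) := by
  constructor
  · intro g hg q hq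
    rcases mem_invs_build hg with rfl | hg
    · simp at hq
    · simpa using hCG.1 g hg q hq
  · intro e he q hq
    rcases mem_edges_build he with ⟨e0, he0, rfl⟩ | rfl | rfl | rfl | rfl | rfl | ⟨i, hi, rfl | rfl⟩
    · simpa [shiftE, edgeGuard] using hCG.2 e0 he0 q (by simpa [shiftE, edgeGuard] using hq)
    all_goals simp [eStart, ePrv, ePrv2, eFin, eEnd, loopE, edgeGuard] at hq

theorem updates_length_build (hWF : WellFormed A) :
    ∀ e ∈ edges (build A lf), (edgeUpdates e).length = numEn (build A lf) := by
  intro e he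
  rcases mem_edges_build he with ⟨e0, he0, rfl⟩ | rfl | rfl | rfl | rfl | rfl | ⟨i, hi, rfl | rfl⟩
  · simpa [shiftE, edgeUpdates] using (hWF.2.2.2.2.2.2.2.2.2 e0 he0).2.2.2.2.2.2
  · simp [eStart, edgeUpdates]
  · simp [ePrv, edgeUpdates]
  · simp [ePrv2, edgeUpdates]
  · simp [eFin, edgeUpdates]
  · simp [eEnd, edgeUpdates]
  · simpa [loopE, edgeUpdates] using unitU_length A (c := 1) hi
  · simpa [loopE, edgeUpdates] using unitU_length A (c := -1) hi

theorem invOf_build_zero : invOf (build A lf) 0 = [] := by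
  simp [invOf, invs_build]

theorem invOf_build_shift (hWF : WellFormed A) {l : ℕ} (hl : l < numLoc A) :
    invOf (build A lf) (l + 1) = invOf A l := by
  have hlen : (invs A).length = numLoc A := hWF.2.2.2.2.2.1
  simp only [invOf, invs_build]
  rw [List.getD_append _ _ _ _ (by simp [hlen]; try omega), List.getD_cons_succ]

theorem invOf_build_hi (hWF : WellFormed A) {l : ℕ} (hl : numLoc A ≤ l) :
    invOf (build A lf) (l + 1) = [] := by
  have hlen : (invs A).length = numLoc A := hWF.2.2.2.2.2.1
  simp only [invOf, invs_build]
  rw [List.getD_append_right _ _ _ _ (by simp [hlen]; try omega)]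
  have h3 : l + 1 - ([] :: invs A).length = l - numLoc A := by simp [hlen]
  rw [h3]
  rcases (by omega : l - numLoc A = 0 ∨ l - numLoc A = 1 ∨ 2 ≤ l - numLoc A) with h | h | h
  · rw [h]; rfl
  · rw [h]; rfl
  · rcases (by omega : l - numLoc A = 2 ∨ 3 ≤ l - numLoc A) with h' | h'
    · rw [h']; rfl
    · exact List.getD_eq_default _ _ (by simpa using h')

theorem wf_build (hWF : WellFormed A) (hlf : lf < numLoc A) : WellFormed (build A lf) := by
  obtain ⟨h1, h2, h3, h4, h5, h6, h7, h8, h9, h10⟩ := hWF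
  have hWF' : WellFormed A := ⟨h1, h2, h3, h4, h5, h6, h7, h8, h9, h10⟩
  refine ⟨by simp, by simp, by simp, ?_, ?_, ?_, ?_, ?_, ?_, ?_⟩
  · intro l hl; simp only [privLocs_build, List.mem_singleton] at hl; simp [hl]
  · intro l hl; simp only [finalLocs_build, List.mem_singleton] at hl
    subst hl
    exact ⟨by simp, by simp; try omega⟩
  · simp [h6]
  · intro g hg q hq
    rcases mem_invs_build hg with rfl | hg
    · simp at hq
    · simpa using h7 g hg q hq
  · simp [h8]
  · intro r hr
    rcases mem_rates_build hr with rfl | hr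
    · simp
    · simpa using h9 r hr
  · intro e he
    rcases mem_edges_build he with ⟨e0, he0, rfl⟩ | rfl | rfl | rfl | rfl | rfl | ⟨i, hi, rfl | rfl⟩
    · obtain ⟨ha, hb, hc, hd, hee, hf, hg⟩ := h10 e0 he0
      refine ⟨?_, ?_, ?_, by simpa [shiftE, edgeAct] using hd,
        by simpa [shiftE, edgeGuard] using hee,
        by simpa [shiftE, edgeResets] using hf,
        by simpa [shiftE, edgeUpdates] using hg⟩
      · simp only [shiftE, edgeSrc, numLoc_build]; simp only [edgeSrc] at ha; try omega
      · simp only [shiftE, edgeTgt, numLoc_build]; simp only [edgeTgt] at hb; try omega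
      · simp only [shiftE, edgeSrc, finalLocs_build, List.mem_singleton]
        simp only [edgeSrc] at ha; try omega
    · exact ⟨by simp [eStart, edgeSrc], by simp [eStart, edgeTgt]; try omega,
        by simp [eStart, edgeSrc], by simp [eStart, edgeAct], by simp [eStart, edgeGuard],
        by intro x hx; simpa [eStart, edgeResets] using (List.mem_range.1 hx),
        by simp [eStart, edgeUpdates]⟩
    · exact ⟨by simp [ePrv, edgeSrc], by simp [ePrv, edgeTgt]; try omega,
        by simp [ePrv, edgeSrc], by simp [ePrv, edgeAct], by simp [ePrv, edgeGuard],
        by simp [ePrv, edgeResets], by simp [ePrv, edgeUpdates]⟩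
    · exact ⟨by simp [ePrv2, edgeSrc]; try omega, by simp [ePrv2, edgeTgt]; try omega,
        by simp [ePrv2, edgeSrc], by simp [ePrv2, edgeAct], by simp [ePrv2, edgeGuard],
        by simp [ePrv2, edgeResets], by simp [ePrv2, edgeUpdates]⟩
    · exact ⟨by simp [eFin, edgeSrc]; try omega, by simp [eFin, edgeTgt]; try omega,
        by simp [eFin, edgeSrc]; try omega, by simp [eFin, edgeAct], by simp [eFin, edgeGuard],
        by simp [eFin, edgeResets], by simp [eFin, edgeUpdates]⟩
    · exact ⟨by simp [eEnd, edgeSrc]; try omega, by simp [eEnd, edgeTgt]; try omega,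
        by simp [eEnd, edgeSrc], by simp [eEnd, edgeAct], by simp [eEnd, edgeGuard],
        by simp [eEnd, edgeResets], by simp [eEnd, edgeUpdates]⟩
    · exact ⟨by simp [loopE, edgeSrc]; try omega, by simp [loopE, edgeTgt]; try omega,
        by simp [loopE, edgeSrc], by simp [loopE, edgeAct], by simp [loopE, edgeGuard],
        by simp [loopE, edgeResets],
        by simpa [loopE, edgeUpdates] using unitU_length A (c := 1) hi⟩
    · exact ⟨by simp [loopE, edgeSrc]; try omega, by simp [loopE, edgeTgt]; try omega,
        by simp [loopE, edgeSrc], by simp [loopE, edgeAct], by simp [loopE, edgeGuard],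
        by simp [loopE, edgeResets],
        by simpa [loopE, edgeUpdates] using unitU_length A (c := -1) hi⟩

end BuildFacts
section EdgeSimp

variable (A : GMETA) (lf : ℕ) (e : Edge) (i : ℕ) (c : ℤ)

@[simp] theorem edgeSrc_shiftE : edgeSrc (shiftE e) = edgeSrc e + 1 := rfl
@[simp] theorem edgeGuard_shiftE : edgeGuard (shiftE e) = edgeGuard e := rfl
@[simp] theorem edgeAct_shiftE : edgeAct (shiftE e) = edgeAct e := rfl
@[simp] theorem edgeResets_shiftE : edgeResets (shiftE e) = edgeResets e := rfl
@[simp] theorem edgeUpdates_shiftE : edgeUpdates (shiftE e) = edgeUpdates e := rfl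
@[simp] theorem edgeTgt_shiftE : edgeTgt (shiftE e) = edgeTgt e + 1 := rfl

@[simp] theorem eStart_src : edgeSrc (eStart A) = 0 := rfl
@[simp] theorem eStart_guard : edgeGuard (eStart A) = [] := rfl
@[simp] theorem eStart_resets : edgeResets (eStart A) = List.range (numClk A) := rfl
@[simp] theorem eStart_updates : edgeUpdates (eStart A) = zvec A := rfl
@[simp] theorem eStart_tgt : edgeTgt (eStart A) = 1 := rfl

@[simp] theorem ePrv_src : edgeSrc (ePrv A) = 0 := rfl
@[simp] theorem ePrv_guard : edgeGuard (ePrv A) = [] := rfl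
@[simp] theorem ePrv_resets : edgeResets (ePrv A) = [] := rfl
@[simp] theorem ePrv_updates : edgeUpdates (ePrv A) = zvec A := rfl
@[simp] theorem ePrv_tgt : edgeTgt (ePrv A) = numLoc A + 1 := rfl

@[simp] theorem ePrv2_src : edgeSrc (ePrv2 A) = numLoc A + 1 := rfl
@[simp] theorem ePrv2_guard : edgeGuard (ePrv2 A) = [] := rfl
@[simp] theorem ePrv2_resets : edgeResets (ePrv2 A) = [] := rfl
@[simp] theorem ePrv2_updates : edgeUpdates (ePrv2 A) = zvec A := rfl
@[simp] theorem ePrv2_tgt : edgeTgt (ePrv2 A) = numLoc A + 2 := rfl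

@[simp] theorem eFin_src : edgeSrc (eFin A lf) = lf + 1 := rfl
@[simp] theorem eFin_guard : edgeGuard (eFin A lf) = [] := rfl
@[simp] theorem eFin_resets : edgeResets (eFin A lf) = [] := rfl
@[simp] theorem eFin_updates : edgeUpdates (eFin A lf) = zvec A := rfl
@[simp] theorem eFin_tgt : edgeTgt (eFin A lf) = numLoc A + 2 := rfl

@[simp] theorem eEnd_src : edgeSrc (eEnd A) = numLoc A + 2 := rfl
@[simp] theorem eEnd_guard : edgeGuard (eEnd A) = [] := rfl
@[simp] theorem eEnd_resets : edgeResets (eEnd A) = [] := rfl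
@[simp] theorem eEnd_updates : edgeUpdates (eEnd A) = zvec A := rfl
@[simp] theorem eEnd_tgt : edgeTgt (eEnd A) = numLoc A + 3 := rfl

@[simp] theorem loopE_src : edgeSrc (loopE A i c) = numLoc A + 2 := rfl
@[simp] theorem loopE_guard : edgeGuard (loopE A i c) = [] := rfl
@[simp] theorem loopE_resets : edgeResets (loopE A i c) = [] := rfl
@[simp] theorem loopE_updates : edgeUpdates (loopE A i c) = unitU A i c := rfl
@[simp] theorem loopE_tgt : edgeTgt (loopE A i c) = numLoc A + 2 := rfl

theorem mem_shiftE (h : e ∈ edges A) : shiftE e ∈ edges (build A lf) := by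
  simp only [edges_build, List.mem_append, List.mem_map]
  exact Or.inl (Or.inl ⟨e, h, rfl⟩)

theorem mem_eStart : eStart A ∈ edges (build A lf) := by
  simp [edges_build]

theorem mem_ePrv : ePrv A ∈ edges (build A lf) := by
  simp [edges_build]

theorem mem_ePrv2 : ePrv2 A ∈ edges (build A lf) := by
  simp [edges_build]

theorem mem_eFin : eFin A lf ∈ edges (build A lf) := by
  simp [edges_build]

theorem mem_eEnd : eEnd A ∈ edges (build A lf) := by
  simp [edges_build]

theorem mem_loopE (hi : i < numEn A) (hc : c = 1 ∨ c = -1) :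
    loopE A i c ∈ edges (build A lf) := by
  simp only [edges_build, List.mem_append, List.mem_flatMap, List.mem_range]
  exact Or.inr ⟨i, hi, by rcases hc with rfl | rfl <;> simp⟩

end EdgeSimp

theorem satIneqs_nil (B : GMETA) (w v : ℕ → ℝ) : satIneqs B w v [] := by
  simp [satIneqs]

section Fwd

variable {A : GMETA} {lf : ℕ}

theorem validState_build_init : validState (build A lf) initState := by
  refine ⟨by simp [initState], fun i => le_refl 0, fun i => le_refl 0, ?_⟩
  rw [show invOf (build A lf) initState.1 = [] from invOf_build_zero]
  exact satIneqs_nil _ _ _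

def shiftP (p : EState × ℝ) : EState × ℝ := ((p.1.1 + 1, p.1.2.1, p.1.2.2), p.2)

theorem satIneqs_build_iff {w v : ℕ → ℝ} {g : List Ineq} :
    satIneqs (build A lf) w v g ↔ satIneqs A w v g :=
  satIneqs_congr (by simp) (fun _ _ => rfl) (fun _ => rfl) g

theorem fwd (hWF : WellFormed A) (hD : Discrete A) {tr} (h : Trace A tr) :
    Trace (build A lf) (tr.map shiftP ++ [(initState, 0)]) := by
  have hD' : Discrete (build A lf) := discrete_build hD
  induction h with
  | init h0 =>
    have hclk : resetClocks (List.range (numClk A)) (elapseClocks (fun _ => (0:ℝ)) 0)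
        = fun _ => (0:ℝ) := by
      funext i; simp [resetClocks, elapseClocks]
    have heq0 : ((edgeTgt (eStart A),
        resetClocks (edgeResets (eStart A)) (elapseClocks (fun _ => (0:ℝ)) 0),
        updateEnergies (edgeUpdates (eStart A))
          (elapseEnergies (build A lf) 0 (fun _ => (0:ℝ)) 0)) : EState)
        = (((1:ℕ), fun _ => (0:ℝ), fun _ => (0:ℝ)) : EState) := by
      rw [elapseEnergies_discrete hD', eStart_updates, updateEnergies_zvec,
        eStart_resets, eStart_tgt, hclk]
    have hv1 : validState (build A lf) (((1:ℕ), fun _ => (0:ℝ), fun _ => (0:ℝ)) : EState) := by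
      refine ⟨by simp, fun i => le_rfl, fun i => le_rfl, ?_⟩
      show satIneqs _ _ _ (invOf (build A lf) 1)
      rw [show invOf (build A lf) 1 = invOf A 0 from invOf_build_shift hWF hWF.1]
      exact satIneqs_build_iff.2 h0.2.2.2
    have hstep := Trace.step (A := build A lf) (t := 0) (e := eStart A)
      (tr := []) (l := 0) (w := fun _ => 0) (v := fun _ => 0) (τ := 0)
      (Trace.init validState_build_init) le_rfl
      (fun t' h1 h2 => by
        refine ⟨by simp, fun i => by simpa [elapseClocks] using h1, ?_, ?_⟩
        · rw [elapseEnergies_discrete hD']; exact fun i => le_refl 0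
        · rw [show invOf (build A lf) 0 = [] from invOf_build_zero]
          exact satIneqs_nil _ _ _)
      (mem_eStart A lf) rfl (by rw [eStart_guard]; exact satIneqs_nil _ _ _)
      (by rw [heq0]; exact hv1)
    have heq : ((edgeTgt (eStart A),
        resetClocks (edgeResets (eStart A)) (elapseClocks (fun _ => (0:ℝ)) 0),
        updateEnergies (edgeUpdates (eStart A))
          (elapseEnergies (build A lf) 0 (fun _ => (0:ℝ)) 0)), (0:ℝ) + 0)
        = ((((1 : ℕ), fun _ => (0:ℝ), fun _ => (0:ℝ)) : EState), (0:ℝ)) := by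
      rw [heq0]; norm_num
    rw [heq] at hstep
    simpa [shiftP, initState] using hstep
  | step t e htr ht0 hmid hmem hsrc hg hval ih =>
    rename_i tr' l w v τ
    have hl : l < numLoc A := (hmid 0 le_rfl ht0).1
    have htgt : edgeTgt e < numLoc A := hval.1
    rw [elapseEnergies_discrete hD] at hg hval
    have hstep := Trace.step (A := build A lf) (t := t) (e := shiftE e)
      (tr := tr'.map shiftP ++ [(initState, 0)]) (l := l + 1) (w := w) (v := v) (τ := τ)
      (show Trace (build A lf) (((l + 1, w, v), τ) :: (tr'.map shiftP ++ [(initState, 0)]))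
        from ih) ht0
      (fun t' h1 h2 => by
        have hm := hmid t' h1 h2
        rw [elapseEnergies_discrete hD] at hm
        rw [elapseEnergies_discrete hD']
        refine ⟨by simp; omega, hm.2.1, hm.2.2.1, ?_⟩
        rw [invOf_build_shift hWF hl]
        exact satIneqs_build_iff.2 hm.2.2.2)
      (mem_shiftE A lf e hmem)
      (by rw [edgeSrc_shiftE, hsrc])
      (by rw [elapseEnergies_discrete hD', edgeGuard_shiftE]
          exact satIneqs_build_iff.2 hg)
      (by
        rw [elapseEnergies_discrete hD', edgeTgt_shiftE, edgeResets_shiftE,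
          edgeUpdates_shiftE]
        refine ⟨by simp; omega, hval.2.1, hval.2.2.1, ?_⟩
        rw [invOf_build_shift hWF htgt]
        exact satIneqs_build_iff.2 hval.2.2.2)
    rw [elapseEnergies_discrete hD'] at hstep
    simpa [shiftP, elapseEnergies_discrete hD] using hstep

end Fwd
section Back

variable {A : GMETA} {lf : ℕ}

theorem loc0_state {tr} (h : Trace (build A lf) tr) :
    ∀ w v τ rest, tr = ((0, w, v), τ) :: rest →
      w = (fun _ => (0:ℝ)) ∧ v = (fun _ => (0:ℝ)) := by
  cases h with
  | init h0 =>
    intro w v τ rest heq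
    simp only [List.cons.injEq, Prod.mk.injEq, initState] at heq
    exact ⟨heq.1.1.2.1.symm, heq.1.1.2.2.symm⟩
  | step t e htr ht0 hmid hmem hsrc hg hval =>
    intro w v τ rest heq
    exfalso
    simp only [List.cons.injEq, Prod.mk.injEq] at heq
    have htgt : edgeTgt e = 0 := heq.1.1.1
    clear heq
    rcases mem_edges_build hmem with ⟨e0, he0, rfl⟩ | rfl | rfl | rfl | rfl | rfl |
      ⟨i, hi, rfl | rfl⟩
    · rw [edgeTgt_shiftE] at htgt; omega
    · rw [eStart_tgt] at htgt; omega
    · rw [ePrv_tgt] at htgt; omega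
    · rw [ePrv2_tgt] at htgt; omega
    · rw [eFin_tgt] at htgt; omega
    · rw [eEnd_tgt] at htgt; omega
    · rw [loopE_tgt] at htgt; omega
    · rw [loopE_tgt] at htgt; omega

theorem back (hWF : WellFormed A) (hD : Discrete A) {tr} (h : Trace (build A lf) tr) :
    ∀ l' w' v' τ' rest', tr = ((l', w', v'), τ') :: rest' → 1 ≤ l' → l' ≤ numLoc A →
    ∃ l w v τ rest, Trace A (((l, w, v), τ) :: rest) ∧ l' = l + 1 ∧
      (∀ i, i < numClk A → w' i = w i) ∧ (∀ i, v' i = v i) ∧ (∀ i, 0 ≤ w i) := by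
  have hD' : Discrete (build A lf) := discrete_build hD
  induction h with
  | init h0 =>
    intro l' w' v' τ' rest' heq h1 h2
    exfalso
    simp only [List.cons.injEq, Prod.mk.injEq, initState] at heq
    omega
  | step t e htr ht0 hmid hmem hsrc hg hval ih =>
    rename_i tr0 l w v τ
    intro l' w' v' τ' rest' heq h1 h2
    simp only [List.cons.injEq, Prod.mk.injEq] at heq
    obtain ⟨⟨⟨hl', hw', hv'⟩, hτ'⟩, hrest'⟩ := heq
    rcases mem_edges_build hmem with ⟨e0, he0, rfl⟩ | rfl | rfl | rfl | rfl | rfl |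
      ⟨i, hi, rfl | rfl⟩
    · -- shifted edge of A
      obtain ⟨hsrc0, htgt0, -, -, -, hres0, -⟩ := hWF.2.2.2.2.2.2.2.2.2 e0 he0
      rw [edgeSrc_shiftE] at hsrc
      obtain ⟨l0, w0, v0, τ0, rest0, htrA, hl0, hw0, hv0, hwn⟩ :=
        ih _ _ _ _ _ rfl (by omega) (by omega : l ≤ numLoc A)
      have hl0' : l0 = edgeSrc e0 := by omega
      subst hl0'
      rw [elapseEnergies_discrete hD'] at hval hg
      have hstep := Trace.step (A := A) (t := t) (e := e0) htrA ht0
        (fun t' ht0' ht1' => by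
          have hm := hmid t' ht0' ht1'
          rw [elapseEnergies_discrete hD'] at hm
          rw [elapseEnergies_discrete hD]
          refine ⟨?_, ?_, ?_, ?_⟩
          · show edgeSrc e0 < numLoc A
            exact hsrc0
          · show ∀ i, 0 ≤ elapseClocks w0 t' i
            intro i; simp only [elapseClocks]; linarith [hwn i]
          · show ∀ i, 0 ≤ v0 i
            intro i; rw [← hv0 i]; exact hm.2.2.1 i
          · show satIneqs A (elapseClocks w0 t') v0 (invOf A (edgeSrc e0))
            have hinv : invOf (build A lf) l = invOf A (edgeSrc e0) := by
              rw [← hsrc]; exact invOf_build_shift hWF hsrc0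
            have hm4 := hm.2.2.2
            dsimp only at hm4
            rw [hinv] at hm4
            refine (satIneqs_congr (by simp) (fun i hi => ?_) hv0 _).1 hm4
            simp only [elapseClocks]; rw [hw0 i hi])
        he0 rfl
        (by
          rw [elapseEnergies_discrete hD]
          rw [edgeGuard_shiftE] at hg
          refine (satIneqs_congr (by simp) (fun i hi => ?_) hv0 _).1 hg
          simp only [elapseClocks]; rw [hw0 i hi])
        (by
          rw [elapseEnergies_discrete hD]
          rw [edgeTgt_shiftE, edgeResets_shiftE, edgeUpdates_shiftE] at hval
          refine ⟨?_, ?_, ?_, ?_⟩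
          · show edgeTgt e0 < numLoc A
            exact htgt0
          · show ∀ i, 0 ≤ resetClocks (edgeResets e0) (elapseClocks w0 t) i
            intro i
            simp only [resetClocks, elapseClocks]
            split
            · exact le_rfl
            · linarith [hwn i]
          · show ∀ i, 0 ≤ updateEnergies (edgeUpdates e0) v0 i
            intro i
            rw [updateEnergies_apply, ← hv0 i]
            exact hval.2.2.1 i
          · show satIneqs A (resetClocks (edgeResets e0) (elapseClocks w0 t))
              (updateEnergies (edgeUpdates e0) v0) (invOf A (edgeTgt e0))
            have hinv : invOf (build A lf) (edgeTgt e0 + 1) = invOf A (edgeTgt e0) :=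
              invOf_build_shift hWF htgt0
            have hval4 := hval.2.2.2
            dsimp only at hval4
            rw [hinv] at hval4
            refine (satIneqs_congr (by simp) (fun i hi => ?_) (fun i => ?_) _).1 hval4
            · simp only [resetClocks, elapseClocks]
              split
              · rfl
              · rw [hw0 i hi]
            · rw [updateEnergies_apply, updateEnergies_apply, hv0 i])
      rw [edgeTgt_shiftE] at hl'
      refine ⟨edgeTgt e0, _, _, τ0 + t, _, hstep, by omega, ?_, ?_, ?_⟩
      · intro i hi
        rw [← hw', edgeResets_shiftE]
        simp only [resetClocks, elapseClocks]
        split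
        · rfl
        · rw [hw0 i hi]
      · intro i
        rw [← hv', edgeUpdates_shiftE, elapseEnergies_discrete hD',
          elapseEnergies_discrete hD, updateEnergies_apply, updateEnergies_apply, hv0 i]
      · intro i
        simp only [resetClocks, elapseClocks]
        split
        · exact le_rfl
        · linarith [hwn i]
    · -- eStart
      obtain ⟨hw0, hv0⟩ := loc0_state htr _ _ _ _ (by rw [← hsrc]; rfl)
      subst hw0 hv0
      rw [elapseEnergies_discrete hD', eStart_updates, updateEnergies_zvec] at hval hv'
      have hrc : ∀ i, i < numClk A →
          resetClocks (List.range (numClk A)) (elapseClocks (fun _ => (0:ℝ)) t) i = 0 := by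
        intro i hi; simp [resetClocks, hi]
      have hinit : validState A initState := by
        refine ⟨hWF.1, fun i => le_rfl, fun i => le_rfl, ?_⟩
        have hinv : invOf (build A lf) 1 = invOf A 0 := invOf_build_shift hWF hWF.1
        have hval4 := hval.2.2.2
        dsimp only at hval4
        rw [eStart_tgt, hinv] at hval4
        show satIneqs A (fun _ => (0:ℝ)) (fun _ => (0:ℝ)) (invOf A 0)
        exact (satIneqs_congr (by simp) (fun i hi => hrc i hi) (fun i => rfl) _).1 hval4
      refine ⟨0, _, _, 0, [], Trace.init hinit, by rw [← hl']; rfl, ?_, ?_, fun i => le_rfl⟩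
      · intro i hi
        rw [← hw', eStart_resets]
        exact hrc i hi
      · intro i
        rw [← hv']
    · exfalso; rw [← hl', ePrv_tgt] at h2; omega
    · exfalso; rw [← hl', ePrv2_tgt] at h2; omega
    · exfalso; rw [← hl', eFin_tgt] at h2; omega
    · exfalso; rw [← hl', eEnd_tgt] at h2; omega
    · exfalso; rw [← hl', loopE_tgt] at h2; omega
    · exfalso; rw [← hl', loopE_tgt] at h2; omega

theorem visits_lf (hWF : WellFormed A) {tr} (h : Trace (build A lf) tr) :
    ∀ w v τ rest, tr = ((numLoc A + 2, w, v), τ) :: rest →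
    (∀ p ∈ ((numLoc A + 2, w, v), τ) :: rest, p.1.1 ≠ numLoc A + 1) →
    ∃ p ∈ ((numLoc A + 2, w, v), τ) :: rest, p.1.1 = lf + 1 := by
  induction h with
  | init h0 =>
    intro w v τ rest heq hpure
    exfalso
    simp only [List.cons.injEq, Prod.mk.injEq, initState] at heq
    omega
  | step t e htr ht0 hmid hmem hsrc hg hval ih =>
    rename_i tr0 l w0 v0 τ0
    intro w v τ rest heq hpure
    simp only [List.cons.injEq, Prod.mk.injEq] at heq
    obtain ⟨⟨⟨hl', -, -⟩, -⟩, hrest⟩ := heq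
    have hmemprev : ((l, w0, v0), τ0) ∈ ((numLoc A + 2, w, v), τ) :: rest :=
      List.mem_cons_of_mem _ (by rw [← hrest]; exact List.mem_cons_self)
    rcases mem_edges_build hmem with ⟨e0, he0, rfl⟩ | rfl | rfl | rfl | rfl | rfl |
      ⟨i, hi, rfl | rfl⟩
    · exfalso
      have := (hWF.2.2.2.2.2.2.2.2.2 e0 he0).2.1
      rw [edgeTgt_shiftE] at hl'
      omega
    · exfalso; rw [eStart_tgt] at hl'; omega
    · exfalso; rw [ePrv_tgt] at hl'; omega
    · exact absurd (show l = numLoc A + 1 by rw [← hsrc]; rfl) (hpure _ hmemprev)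
    · exact ⟨_, hmemprev, show l = lf + 1 by rw [← hsrc]; rfl⟩
    · exfalso; rw [eEnd_tgt] at hl'; omega
    · have hl : l = numLoc A + 2 := by rw [← hsrc]; rfl
      subst hl
      obtain ⟨p, hp, hplf⟩ := ih w0 v0 τ0 tr0 rfl
        (fun p hp => hpure p (List.mem_cons_of_mem _ (hrest ▸ hp)))
      exact ⟨p, List.mem_cons_of_mem _ (hrest ▸ hp), hplf⟩
    · have hl : l = numLoc A + 2 := by rw [← hsrc]; rfl
      subst hl
      obtain ⟨p, hp, hplf⟩ := ih w0 v0 τ0 tr0 rfl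
        (fun p hp => hpure p (List.mem_cons_of_mem _ (hrest ▸ hp)))
      exact ⟨p, List.mem_cons_of_mem _ (hrest ▸ hp), hplf⟩

theorem final_visits_lf (hWF : WellFormed A) {tr} (h : Trace (build A lf) tr) :
    ∀ w v τ rest, tr = ((numLoc A + 3, w, v), τ) :: rest →
    (∀ p ∈ ((numLoc A + 3, w, v), τ) :: rest, p.1.1 ≠ numLoc A + 1) →
    ∃ p ∈ ((numLoc A + 3, w, v), τ) :: rest, p.1.1 = lf + 1 := by
  cases h with
  | init h0 =>
    intro w v τ rest heq hpure
    exfalso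
    simp only [List.cons.injEq, Prod.mk.injEq, initState] at heq
    omega
  | step t e htr ht0 hmid hmem hsrc hg hval =>
    rename_i tr0 l w0 v0 τ0
    intro w v τ rest heq hpure
    simp only [List.cons.injEq, Prod.mk.injEq] at heq
    obtain ⟨⟨⟨hl', -, -⟩, -⟩, hrest⟩ := heq
    rcases mem_edges_build hmem with ⟨e0, he0, rfl⟩ | rfl | rfl | rfl | rfl | rfl |
      ⟨i, hi, rfl | rfl⟩
    · exfalso
      have := (hWF.2.2.2.2.2.2.2.2.2 e0 he0).2.1
      rw [edgeTgt_shiftE] at hl'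
      omega
    · exfalso; rw [eStart_tgt] at hl'; omega
    · exfalso; rw [ePrv_tgt] at hl'; omega
    · exfalso; rw [ePrv2_tgt] at hl'; omega
    · exfalso; rw [eFin_tgt] at hl'; omega
    · -- eEnd : previous head at numLoc A + 2
      have hl : l = numLoc A + 2 := by rw [← hsrc]; rfl
      subst hl
      obtain ⟨p, hp, hplf⟩ := visits_lf hWF htr w0 v0 τ0 tr0 rfl
        (fun p hp => hpure p (List.mem_cons_of_mem _ (by rw [← hrest]; exact hp)))
      exact ⟨p, List.mem_cons_of_mem _ (by rw [← hrest]; exact hp), hplf⟩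
    · exfalso; rw [loopE_tgt] at hl'; omega
    · exfalso; rw [loopE_tgt] at hl'; omega

theorem pub_reach (hWF : WellFormed A) (hD : Discrete A) (hlf : lf < numLoc A)
    {x : ℕ → ℝ} (hx : x ∈ EVpub (build A lf)) : ReachLoc A lf := by
  obtain ⟨tr, ⟨htr, hfin, hpure⟩, -⟩ := hx
  rcases tr with _ | ⟨⟨⟨l0, w0, v0⟩, τ0⟩, rest⟩
  · exact absurd rfl (Trace.ne_nil htr)
  have hl0 : l0 = numLoc A + 3 := by
    simpa [runLoc] using hfin
  subst hl0
  have hpure' : ∀ p ∈ (((numLoc A + 3, w0, v0), τ0) :: rest), p.1.1 ≠ numLoc A + 1 := by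
    intro p hp
    have := hpure p hp
    simpa using this
  obtain ⟨p, hp, hplf⟩ := final_visits_lf hWF htr w0 v0 τ0 rest rfl hpure'
  obtain ⟨rest2, htr2⟩ := trace_mem htr hp
  rcases p with ⟨⟨lp, wp, vp⟩, τp⟩
  have hplf' : lp = lf + 1 := hplf
  obtain ⟨l, w, v, τ, rest3, htrA, hll, -, -, -⟩ :=
    back hWF hD htr2 lp wp vp τp rest2 rfl (by omega) (by omega)
  exact ⟨_, ((l, w, v), τ), htrA, List.mem_cons_self, show l = lf by omega⟩

end Back
section Pump

variable {A : GMETA} {lf : ℕ}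

def natVec (A : GMETA) (f : ℕ → ℕ) : ℕ → ℝ := fun i => if i < numEn A then (f i : ℝ) else 0

def Nset (A : GMETA) : Set (ℕ → ℝ) := {v | ∃ f, v = natVec A f}

theorem natVec_nonneg (f : ℕ → ℕ) (i : ℕ) : 0 ≤ natVec A f i := by
  unfold natVec; split <;> positivity

theorem natVec_zero : natVec A (fun _ => 0) = fun _ => (0:ℝ) := by
  funext i; simp [natVec]

theorem natVec_rep {v : ℕ → ℝ} (h1 : ∀ i, ∃ k : ℕ, v i = (k : ℝ))
    (h2 : ∀ i, numEn A ≤ i → v i = 0) : ∃ f, v = natVec A f := by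
  refine ⟨fun i => Classical.choose (h1 i), ?_⟩
  funext i
  unfold natVec
  split
  · exact Classical.choose_spec (h1 i)
  · exact h2 i (by omega)

theorem validState_build_hi (hWF : WellFormed A) {l : ℕ} (hl : numLoc A ≤ l)
    (hl3 : l < numLoc A + 3) {w v : ℕ → ℝ} (hw : ∀ i, 0 ≤ w i) (hv : ∀ i, 0 ≤ v i) :
    validState (build A lf) (l + 1, w, v) := by
  refine ⟨by simp; omega, hw, hv, ?_⟩
  show satIneqs _ _ _ (invOf (build A lf) (l + 1))
  rw [invOf_build_hi hWF hl]
  exact satIneqs_nil _ _ _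

theorem updateEnergies_unitU_up {i : ℕ} (hi : i < numEn A) (g : ℕ → ℕ) :
    updateEnergies (unitU A i 1) (natVec A g) = natVec A (Function.update g i (g i + 1)) := by
  funext j
  rw [updateEnergies_apply, unitU_getD]
  unfold natVec
  by_cases hj : j = i
  · subst hj
    simp only [if_pos rfl, if_pos hi, Function.update_self]
    push_cast; ring
  · simp [hj, Function.update_of_ne hj]

theorem updateEnergies_unitU_down {i : ℕ} (hi : i < numEn A) (g : ℕ → ℕ) (hg : 1 ≤ g i) :
    updateEnergies (unitU A i (-1)) (natVec A g) = natVec A (Function.update g i (g i - 1)) := by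
  funext j
  rw [updateEnergies_apply, unitU_getD]
  unfold natVec
  by_cases hj : j = i
  · subst hj
    simp only [if_pos rfl, if_pos hi, Function.update_self]
    rw [Nat.cast_sub hg]
    push_cast; ring
  · simp [hj, Function.update_of_ne hj]

theorem pump (hWF : WellFormed A) (hD : Discrete A) :
    ∀ (m : ℕ) (f g : ℕ → ℕ) (w : ℕ → ℝ) (τ : ℝ) (rest : List (EState × ℝ)),
    (∑ i ∈ Finset.range (numEn A), ((f i - g i) + (g i - f i)) = m) →
    Trace (build A lf) (((numLoc A + 2, w, natVec A g), τ) :: rest) →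
    ∃ w2 τ2 tr2, Trace (build A lf) (((numLoc A + 2, w2, natVec A f), τ2) :: tr2) ∧
      (((numLoc A + 2, w, natVec A g), τ) :: rest) <:+
        (((numLoc A + 2, w2, natVec A f), τ2) :: tr2) ∧
      ∀ p ∈ tr2, p.1.1 = numLoc A + 2 ∨
        p ∈ (((numLoc A + 2, w, natVec A g), τ) :: rest) := by
  have hD' : Discrete (build A lf) := discrete_build hD
  intro m
  induction m using Nat.strong_induction_on with
  | _ m ih =>
    intro f g w τ rest hm htr
    by_cases hfg : ∀ i < numEn A, f i = g i
    · have hv : natVec A f = natVec A g := by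
        funext i; unfold natVec; split
        · rw [hfg i ‹_›]
        · rfl
      exact ⟨w, τ, rest, by rw [hv]; exact htr, by rw [hv],
        fun p hp => Or.inr (List.mem_cons_of_mem _ hp)⟩
    · push_neg at hfg
      obtain ⟨i, hi, hne⟩ := hfg
      have hwn : ∀ j, 0 ≤ w j := (trace_head_valid htr).2.1
      -- one pumping step in direction of f
      rcases Nat.lt_or_ge (g i) (f i) with hdir | hdir
      · -- increment
        set g' : ℕ → ℕ := Function.update g i (g i + 1) with hg'
        have hupd : updateEnergies (unitU A i 1) (natVec A g) = natVec A g' :=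
          updateEnergies_unitU_up hi g
        have hstate : ((edgeTgt (loopE A i 1),
            resetClocks (edgeResets (loopE A i 1)) (elapseClocks w 0),
            updateEnergies (edgeUpdates (loopE A i 1))
              (elapseEnergies (build A lf) (numLoc A + 2) (natVec A g) 0)) : EState)
            = ((numLoc A + 2, w, natVec A g') : EState) := by
          rw [loopE_tgt, loopE_resets, loopE_updates, resetClocks_nil, elapseClocks_zero,
            elapseEnergies_discrete hD', hupd]
        have hstep := Trace.step (A := build A lf) (t := 0) (e := loopE A i 1) htr le_rfl
          (fun t' h1 h2 => by
            refine ⟨by simp, ?_, ?_, ?_⟩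
            · intro j; simp only [elapseClocks]; linarith [hwn j]
            · rw [elapseEnergies_discrete hD']
              exact natVec_nonneg g
            · show satIneqs _ _ _ (invOf (build A lf) (numLoc A + 2))
              rw [show numLoc A + 2 = (numLoc A + 1) + 1 from rfl,
                invOf_build_hi hWF (by omega)]
              exact satIneqs_nil _ _ _)
          (mem_loopE A lf i 1 hi (Or.inl rfl)) rfl
          (by rw [loopE_guard]; exact satIneqs_nil _ _ _)
          (by rw [hstate]
              exact validState_build_hi hWF (by omega) (by omega) hwn (natVec_nonneg g'))
        rw [show (((edgeTgt (loopE A i 1),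
            resetClocks (edgeResets (loopE A i 1)) (elapseClocks w 0),
            updateEnergies (edgeUpdates (loopE A i 1))
              (elapseEnergies (build A lf) (numLoc A + 2) (natVec A g) 0)), τ + 0)
            : EState × ℝ)
            = (((numLoc A + 2, w, natVec A g') : EState), τ) from by
          rw [hstate, add_zero]] at hstep
        have hlt : ∑ j ∈ Finset.range (numEn A), ((f j - g' j) + (g' j - f j)) < m := by
          rw [← hm]
          refine Finset.sum_lt_sum (fun j hj => ?_) ⟨i, Finset.mem_range.2 hi, ?_⟩
          · by_cases hj' : j = i
            · subst hj'; simp only [hg', Function.update_self]; omega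
            · simp [hg', Function.update_of_ne hj']
          · simp only [hg', Function.update_self]; omega
        obtain ⟨w2, τ2, tr2, htr2, hsuf2, hloc2⟩ := ih _ hlt f g' w τ
          (((numLoc A + 2, w, natVec A g), τ) :: rest) rfl hstep
        refine ⟨w2, τ2, tr2, htr2, ?_, ?_⟩
        · exact (List.suffix_cons _ _).trans hsuf2
        · intro p hp
          rcases hloc2 p hp with h | h
          · exact Or.inl h
          · rcases List.mem_cons.1 h with rfl | h
            · exact Or.inl rfl
            · exact Or.inr h
      · -- decrement
        have hgi : 1 ≤ g i := by omega
        set g' : ℕ → ℕ := Function.update g i (g i - 1) with hg'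
        have hupd : updateEnergies (unitU A i (-1)) (natVec A g) = natVec A g' :=
          updateEnergies_unitU_down hi g hgi
        have hstate : ((edgeTgt (loopE A i (-1)),
            resetClocks (edgeResets (loopE A i (-1))) (elapseClocks w 0),
            updateEnergies (edgeUpdates (loopE A i (-1)))
              (elapseEnergies (build A lf) (numLoc A + 2) (natVec A g) 0)) : EState)
            = ((numLoc A + 2, w, natVec A g') : EState) := by
          rw [loopE_tgt, loopE_resets, loopE_updates, resetClocks_nil, elapseClocks_zero,
            elapseEnergies_discrete hD', hupd]
        have hstep := Trace.step (A := build A lf) (t := 0) (e := loopE A i (-1)) htr le_rfl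
          (fun t' h1 h2 => by
            refine ⟨by simp, ?_, ?_, ?_⟩
            · intro j; simp only [elapseClocks]; linarith [hwn j]
            · rw [elapseEnergies_discrete hD']
              exact natVec_nonneg g
            · show satIneqs _ _ _ (invOf (build A lf) (numLoc A + 2))
              rw [show numLoc A + 2 = (numLoc A + 1) + 1 from rfl,
                invOf_build_hi hWF (by omega)]
              exact satIneqs_nil _ _ _)
          (mem_loopE A lf i (-1) hi (Or.inr rfl)) rfl
          (by rw [loopE_guard]; exact satIneqs_nil _ _ _)
          (by rw [hstate]
              exact validState_build_hi hWF (by omega) (by omega) hwn (natVec_nonneg g'))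
        rw [show (((edgeTgt (loopE A i (-1)),
            resetClocks (edgeResets (loopE A i (-1))) (elapseClocks w 0),
            updateEnergies (edgeUpdates (loopE A i (-1)))
              (elapseEnergies (build A lf) (numLoc A + 2) (natVec A g) 0)), τ + 0)
            : EState × ℝ)
            = (((numLoc A + 2, w, natVec A g') : EState), τ) from by
          rw [hstate, add_zero]] at hstep
        have hlt : ∑ j ∈ Finset.range (numEn A), ((f j - g' j) + (g' j - f j)) < m := by
          rw [← hm]
          refine Finset.sum_lt_sum (fun j hj => ?_) ⟨i, Finset.mem_range.2 hi, ?_⟩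
          · by_cases hj' : j = i
            · subst hj'; simp only [hg', Function.update_self]; omega
            · simp [hg', Function.update_of_ne hj']
          · simp only [hg', Function.update_self]; omega
        obtain ⟨w2, τ2, tr2, htr2, hsuf2, hloc2⟩ := ih _ hlt f g' w τ
          (((numLoc A + 2, w, natVec A g), τ) :: rest) rfl hstep
        refine ⟨w2, τ2, tr2, htr2, ?_, ?_⟩
        · exact (List.suffix_cons _ _).trans hsuf2
        · intro p hp
          rcases hloc2 p hp with h | h
          · exact Or.inl h
          · rcases List.mem_cons.1 h with rfl | h
            · exact Or.inl rfl
            · exact Or.inr h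

end Pump
section EVChar

variable {A : GMETA} {lf : ℕ}

theorem step_generic (hWF : WellFormed A) (hD : Discrete A) {l : ℕ} {w u : ℕ → ℝ} {τ : ℝ}
    {rest} (htr : Trace (build A lf) (((l, w, u), τ) :: rest)) (e : Edge)
    (hmem : e ∈ edges (build A lf)) (hsrc : edgeSrc e = l) (hg : edgeGuard e = [])
    (hres : edgeResets e = []) (hupd : edgeUpdates e = zvec A)
    (htgtval : validState (build A lf) (edgeTgt e, w, u)) :
    Trace (build A lf) (((edgeTgt e, w, u), τ) :: ((l, w, u), τ) :: rest) := by
  have hD' : Discrete (build A lf) := discrete_build hD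
  have hstep := Trace.step (A := build A lf) (t := 0) (e := e) htr le_rfl
    (fun t' h1 h2 => by
      have ht' : t' = 0 := le_antisymm h2 h1
      subst ht'
      rw [elapseClocks_zero, elapseEnergies_discrete hD']
      exact trace_head_valid htr)
    hmem hsrc
    (by rw [hg]; exact satIneqs_nil _ _ _)
    (by rw [hres, elapseClocks_zero, resetClocks_nil, hupd, elapseEnergies_discrete hD',
          updateEnergies_zvec]
        exact htgtval)
  rw [show (((edgeTgt e, resetClocks (edgeResets e) (elapseClocks w 0),
      updateEnergies (edgeUpdates e) (elapseEnergies (build A lf) l u 0)), τ + 0)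
      : EState × ℝ) = (((edgeTgt e, w, u) : EState), τ) from by
    rw [hres, elapseClocks_zero, resetClocks_nil, hupd, elapseEnergies_discrete hD',
      updateEnergies_zvec, add_zero]] at hstep
  exact hstep

theorem start_prv (hWF : WellFormed A) (hD : Discrete A) :
    Trace (build A lf)
      [((numLoc A + 2, fun _ => (0:ℝ), fun _ => (0:ℝ)), 0),
       ((numLoc A + 1, fun _ => (0:ℝ), fun _ => (0:ℝ)), 0), (initState, 0)] := by
  have h0 : Trace (build A lf) [(initState, 0)] := Trace.init validState_build_init
  have h1 := step_generic hWF hD (l := 0) (w := fun _ => 0) (u := fun _ => 0) (τ := 0)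
    (rest := []) h0 (ePrv A) (mem_ePrv A lf) rfl rfl rfl rfl
    (by rw [ePrv_tgt]
        exact validState_build_hi hWF (le_refl _) (by omega)
          (fun i => le_rfl) (fun i => le_rfl))
  rw [ePrv_tgt] at h1
  have h2 := step_generic hWF hD (l := numLoc A + 1) (w := fun _ => 0) (u := fun _ => 0)
    (τ := 0) h1 (ePrv2 A) (mem_ePrv2 A lf) rfl rfl rfl rfl
    (by rw [ePrv2_tgt]
        exact validState_build_hi hWF (by omega) (by omega)
          (fun i => le_rfl) (fun i => le_rfl))
  rw [ePrv2_tgt] at h2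
  exact h2

theorem step_fin (hWF : WellFormed A) (hD : Discrete A) {w u : ℕ → ℝ} {τ : ℝ} {rest}
    (htr : Trace (build A lf) (((lf + 1, w, u), τ) :: rest)) :
    Trace (build A lf)
      (((numLoc A + 2, w, u), τ) :: ((lf + 1, w, u), τ) :: rest) := by
  have hv := trace_head_valid htr
  have h := step_generic hWF hD htr (eFin A lf) (mem_eFin A lf) rfl rfl rfl rfl
    (by rw [eFin_tgt]
        exact validState_build_hi hWF (by omega) (by omega) hv.2.1 hv.2.2.1)
  rw [eFin_tgt] at h
  exact h

theorem step_end (hWF : WellFormed A) (hD : Discrete A) {w u : ℕ → ℝ} {τ : ℝ} {rest}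
    (htr : Trace (build A lf) (((numLoc A + 2, w, u), τ) :: rest)) :
    Trace (build A lf)
      (((numLoc A + 3, w, u), τ) :: ((numLoc A + 2, w, u), τ) :: rest) := by
  have hv := trace_head_valid htr
  have h := step_generic hWF hD htr (eEnd A) (mem_eEnd A lf) rfl rfl rfl rfl
    (by rw [eEnd_tgt]
        exact validState_build_hi hWF (by omega) (by omega) hv.2.1 hv.2.2.1)
  rw [eEnd_tgt] at h
  exact h

theorem EVpriv_sub (hWF : WellFormed A) (hD : Discrete A) :
    EVpriv (build A lf) ⊆ Nset A := by
  rintro x ⟨tr, ⟨htr, hfin, hprv⟩, rfl⟩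
  rcases tr with _ | ⟨p, rest⟩
  · exact absurd rfl (Trace.ne_nil htr)
  have := energies_nat (updates_length_build hWF) (discrete_build hD) htr p
    (List.mem_cons_self)
  exact natVec_rep this.1 (fun i hi => this.2 i hi)

theorem EVpub_sub (hWF : WellFormed A) (hD : Discrete A) :
    EVpub (build A lf) ⊆ Nset A := by
  rintro x ⟨tr, ⟨htr, hfin, hprv⟩, rfl⟩
  rcases tr with _ | ⟨p, rest⟩
  · exact absurd rfl (Trace.ne_nil htr)
  have := energies_nat (updates_length_build hWF) (discrete_build hD) htr p
    (List.mem_cons_self)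
  exact natVec_rep this.1 (fun i hi => this.2 i hi)

theorem EVpriv_sup (hWF : WellFormed A) (hD : Discrete A) :
    Nset A ⊆ EVpriv (build A lf) := by
  rintro x ⟨f, rfl⟩
  have h0 := start_prv (lf := lf) hWF hD
  rw [show (fun _ => (0:ℝ)) = natVec A (fun _ => 0) from natVec_zero.symm] at h0
  obtain ⟨w2, τ2, tr2, htr2, hsuf2, -⟩ := pump hWF hD
    (∑ i ∈ Finset.range (numEn A), ((f i - 0) + (0 - f i))) f (fun _ => 0)
    (natVec A fun _ => 0) 0 _ rfl h0
  have hend := step_end hWF hD htr2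
  refine ⟨_, ⟨hend, by simp [runLoc], ?_⟩, rfl⟩
  · refine ⟨((numLoc A + 1, natVec A fun _ => 0, natVec A fun _ => 0), 0), ?_, by simp⟩
    refine List.mem_cons_of_mem _ (hsuf2.subset ?_)
    exact List.mem_cons_of_mem _ (List.mem_cons_self)

theorem EVpub_sup (hWF : WellFormed A) (hD : Discrete A) (hlf : lf < numLoc A)
    (hr : ReachLoc A lf) : Nset A ⊆ EVpub (build A lf) := by
  rintro x ⟨f, rfl⟩
  obtain ⟨tr0, p, htr0, hp, hlp⟩ := hr
  obtain ⟨rest0, htrA⟩ := trace_mem htr0 hp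
  rcases p with ⟨⟨l0, wp, vp⟩, τp⟩
  have hl0 : l0 = lf := hlp
  have hint := energies_nat (B := A)
    (fun e he => (hWF.2.2.2.2.2.2.2.2.2 e he).2.2.2.2.2.2) hD htrA _
    (List.mem_cons_self)
  obtain ⟨g, hg⟩ := natVec_rep hint.1 hint.2
  subst hg
  have htr1 : Trace (build A lf)
      (((l0 + 1, wp, natVec A g), τp) :: (rest0.map shiftP ++ [(initState, 0)])) :=
    fwd hWF hD htrA
  rw [hl0] at htr1
  have htr2 := step_fin hWF hD htr1
  obtain ⟨w2, τ2, tr2, htr3, hsuf3, hloc3⟩ := pump hWF hD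
    (∑ i ∈ Finset.range (numEn A), ((f i - g i) + (g i - f i))) f g wp τp _ rfl htr2
  have hend := step_end hWF hD htr3
  refine ⟨_, ⟨hend, by simp [runLoc], ?_⟩, rfl⟩
  intro q hq
  simp only [privLocs_build, List.mem_singleton]
  have hq1 : q.1.1 ≠ numLoc A + 1 := by
    rcases List.mem_cons.1 hq with rfl | hq
    · simp; try omega
    · rcases List.mem_cons.1 hq with rfl | hq
      · simp; try omega
      · rcases hloc3 q hq with h | h
        · omega
        · rcases List.mem_cons.1 h with rfl | h
          · simp; try omega
          · rcases List.mem_cons.1 h with rfl | h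
            · simp; try omega
            · rcases List.mem_append.1 h with h | h
              · obtain ⟨q0, hq0, rfl⟩ := List.mem_map.1 h
                have := trace_loc_lt htrA (List.mem_cons_of_mem _ hq0)
                simp only [shiftP]
                omega
              · rcases List.mem_singleton.1 h with rfl
                simp [initState]
  simpa using hq1

end EVChar
section MainIff

variable {A : GMETA} {lf : ℕ}

theorem EVpub_empty (hWF : WellFormed A) (hD : Discrete A) (hlf : lf < numLoc A)
    (hnr : ¬ ReachLoc A lf) : EVpub (build A lf) = ∅ := by
  ext x
  simp only [Set.mem_empty_iff_false, iff_false]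
  intro hx
  exact hnr (pub_reach hWF hD hlf hx)

theorem enopaque_iff (δ : Var3) (hWF : WellFormed A) (hD : Discrete A)
    (hlf : lf < numLoc A) : ENOpaque δ (build A lf) ↔ ReachLoc A lf := by
  have hprv : EVpriv (build A lf) = Nset A :=
    Set.Subset.antisymm (EVpriv_sub hWF hD) (EVpriv_sup hWF hD)
  have h0 : natVec A (fun _ => 0) ∈ Nset A := ⟨_, rfl⟩
  have h0p : natVec A (fun _ => 0) ∈ EVpriv (build A lf) := by rw [hprv]; exact h0
  by_cases hr : ReachLoc A lf
  · have hpub : EVpub (build A lf) = Nset A :=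
      Set.Subset.antisymm (EVpub_sub hWF hD) (EVpub_sup hWF hD hlf hr)
    have h0q : natVec A (fun _ => 0) ∈ EVpub (build A lf) := by rw [hpub]; exact h0
    cases δ with
    | ex => exact iff_of_true ⟨natVec A (fun _ => 0), h0p, h0q⟩ hr
    | weak => exact iff_of_true (show EVpriv (build A lf) ⊆ EVpub (build A lf) by
        rw [hprv, hpub]) hr
    | full => exact iff_of_true (show EVpriv (build A lf) = EVpub (build A lf) by
        rw [hprv, hpub]) hr
  · have hpub : EVpub (build A lf) = ∅ := EVpub_empty hWF hD hlf hr
    cases δ with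
    | ex =>
      refine iff_of_false ?_ hr
      rintro ⟨x, -, hx⟩
      rw [hpub] at hx
      exact hx
    | weak =>
      refine iff_of_false ?_ hr
      intro hsub
      have := hsub h0p
      rw [hpub] at this
      exact this
    | full =>
      refine iff_of_false ?_ hr
      intro heq
      have : natVec A (fun _ => 0) ∈ EVpub (build A lf) := heq ▸ h0p
      rw [hpub] at this
      exact this

end MainIff

open Primrec in
theorem computable_build : Computable (fun p : GMETA × ℕ => build p.1 p.2) := by
  have hA : Primrec (fun p : GMETA × ℕ => p.1) := fst
  have hnumAct : Primrec (fun p : GMETA × ℕ => numAct p.1) := fst.comp hA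
  have hnumLoc : Primrec (fun p : GMETA × ℕ => numLoc p.1) := fst.comp (snd.comp hA)
  have hnumClk : Primrec (fun p : GMETA × ℕ => numClk p.1) :=
    fst.comp (snd.comp (snd.comp hA))
  have hnumEn : Primrec (fun p : GMETA × ℕ => numEn p.1) :=
    fst.comp (snd.comp (snd.comp (snd.comp hA)))
  have hinvs : Primrec (fun p : GMETA × ℕ => invs p.1) :=
    fst.comp (snd.comp (snd.comp (snd.comp (snd.comp (snd.comp (snd.comp hA))))))
  have hrates : Primrec (fun p : GMETA × ℕ => rates p.1) :=
    fst.comp (snd.comp (snd.comp (snd.comp (snd.comp (snd.comp (snd.comp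
      (snd.comp hA)))))))
  have hedges : Primrec (fun p : GMETA × ℕ => edges p.1) :=
    snd.comp (snd.comp (snd.comp (snd.comp (snd.comp (snd.comp (snd.comp
      (snd.comp hA)))))))
  have hrepl : Primrec (fun n : ℕ => List.replicate n (0:ℤ)) :=
    (list_map list_range ((const (0:ℤ)).to₂)).of_eq fun n => by
      simp [List.map_const']
  have hzvec : Primrec (fun p : GMETA × ℕ => zvec p.1) := hrepl.comp hnumEn
  -- unit updates
  have hunit : ∀ c : ℤ, Primrec₂ (fun (p : GMETA × ℕ) (i : ℕ) => unitU p.1 i c) := by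
    intro c
    have h1 : Primrec (fun q : (GMETA × ℕ) × ℕ => List.replicate q.2 (0:ℤ)) :=
      hrepl.comp snd
    have h2 : Primrec (fun q : (GMETA × ℕ) × ℕ => numEn q.1.1 - (q.2 + 1)) :=
      nat_sub.comp (hnumEn.comp fst) (succ.comp snd)
    exact (list_append.comp h1
      (list_cons.comp (const c) (hrepl.comp h2))).to₂
  -- shift of an edge
  have hshift : Primrec₂ (fun (_ : GMETA × ℕ) (e : Edge) => shiftE e) := by
    have he : Primrec (fun q : (GMETA × ℕ) × Edge => q.2) := snd
    exact (Primrec.pair (nat_add.comp (fst.comp he) (const 1))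
      (Primrec.pair (fst.comp (snd.comp he))
        (Primrec.pair (fst.comp (snd.comp (snd.comp he)))
          (Primrec.pair (fst.comp (snd.comp (snd.comp (snd.comp he))))
            (Primrec.pair (fst.comp (snd.comp (snd.comp (snd.comp (snd.comp he)))))
              (nat_add.comp (snd.comp (snd.comp (snd.comp (snd.comp (snd.comp he)))))
                (const 1))))))).to₂
  have hmap : Primrec (fun p : GMETA × ℕ => (edges p.1).map shiftE) :=
    list_map hedges hshift
  have hn1 : Primrec (fun p : GMETA × ℕ => numLoc p.1 + 1) :=
    nat_add.comp hnumLoc (const 1)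
  have hn2 : Primrec (fun p : GMETA × ℕ => numLoc p.1 + 2) :=
    nat_add.comp hnumLoc (const 2)
  have hn3 : Primrec (fun p : GMETA × ℕ => numLoc p.1 + 3) :=
    nat_add.comp hnumLoc (const 3)
  have hn4 : Primrec (fun p : GMETA × ℕ => numLoc p.1 + 4) :=
    nat_add.comp hnumLoc (const 4)
  have heStart : Primrec (fun p : GMETA × ℕ => eStart p.1) :=
    Primrec.pair (const 0) (Primrec.pair (const ([] : List Ineq))
      (Primrec.pair (const (none : Option ℕ))
        (Primrec.pair (list_range.comp hnumClk) (Primrec.pair hzvec (const 1)))))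
  have hePrv : Primrec (fun p : GMETA × ℕ => ePrv p.1) :=
    Primrec.pair (const 0) (Primrec.pair (const ([] : List Ineq))
      (Primrec.pair (const (none : Option ℕ))
        (Primrec.pair (const ([] : List ℕ)) (Primrec.pair hzvec hn1))))
  have hePrv2 : Primrec (fun p : GMETA × ℕ => ePrv2 p.1) :=
    Primrec.pair hn1 (Primrec.pair (const ([] : List Ineq))
      (Primrec.pair (const (none : Option ℕ))
        (Primrec.pair (const ([] : List ℕ)) (Primrec.pair hzvec hn2))))
  have heFin : Primrec (fun p : GMETA × ℕ => eFin p.1 p.2) :=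
    Primrec.pair (nat_add.comp snd (const 1)) (Primrec.pair (const ([] : List Ineq))
      (Primrec.pair (const (none : Option ℕ))
        (Primrec.pair (const ([] : List ℕ)) (Primrec.pair hzvec hn2))))
  have heEnd : Primrec (fun p : GMETA × ℕ => eEnd p.1) :=
    Primrec.pair hn2 (Primrec.pair (const ([] : List Ineq))
      (Primrec.pair (const (none : Option ℕ))
        (Primrec.pair (const ([] : List ℕ)) (Primrec.pair hzvec hn3))))
  have hfive : Primrec (fun p : GMETA × ℕ =>
      [eStart p.1, ePrv p.1, ePrv2 p.1, eFin p.1 p.2, eEnd p.1]) :=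
    list_cons.comp heStart (list_cons.comp hePrv (list_cons.comp hePrv2
      (list_cons.comp heFin (list_cons.comp heEnd (const [])))))
  have hloop : ∀ c : ℤ, Primrec₂ (fun (p : GMETA × ℕ) (i : ℕ) => loopE p.1 i c) := by
    intro c
    have hn2' : Primrec (fun q : (GMETA × ℕ) × ℕ => numLoc q.1.1 + 2) := hn2.comp fst
    exact (Primrec.pair hn2' (Primrec.pair (const ([] : List Ineq))
      (Primrec.pair (const (none : Option ℕ))
        (Primrec.pair (const ([] : List ℕ))
          (Primrec.pair ((hunit c).comp fst snd) hn2'))))).to₂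
  have hloops : Primrec (fun p : GMETA × ℕ =>
      (List.range (numEn p.1)).flatMap (fun i => [loopE p.1 i 1, loopE p.1 i (-1)])) :=
    list_flatMap (list_range.comp hnumEn)
      ((list_cons.comp ((hloop 1).comp fst snd)
        (list_cons.comp ((hloop (-1)).comp fst snd) (const []))).to₂)
  have hedges' : Primrec (fun p : GMETA × ℕ =>
      (edges p.1).map shiftE ++ [eStart p.1, ePrv p.1, ePrv2 p.1, eFin p.1 p.2, eEnd p.1] ++
      (List.range (numEn p.1)).flatMap (fun i => [loopE p.1 i 1, loopE p.1 i (-1)])) :=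
    list_append.comp (list_append.comp hmap hfive) hloops
  have hinvs' : Primrec (fun p : GMETA × ℕ =>
      ([] : List Ineq) :: invs p.1 ++ [[], [], []]) :=
    list_append.comp (list_cons.comp (const ([] : List Ineq)) hinvs)
      (const [[], [], []])
  have hrates' : Primrec (fun p : GMETA × ℕ =>
      zvec p.1 :: rates p.1 ++ [zvec p.1, zvec p.1, zvec p.1]) :=
    list_append.comp (list_cons.comp hzvec hrates)
      (list_cons.comp hzvec (list_cons.comp hzvec (list_cons.comp hzvec (const []))))
  have hprim : Primrec (fun p : GMETA × ℕ => build p.1 p.2) :=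
    Primrec.pair hnumAct (Primrec.pair hn4 (Primrec.pair hnumClk (Primrec.pair hnumEn
      (Primrec.pair (list_cons.comp hn1 (const []))
        (Primrec.pair (list_cons.comp hn3 (const []))
          (Primrec.pair hinvs' (Primrec.pair hrates' hedges')))))))
  exact hprim.to_comp
/-- For each δ ∈ {∃, weak, full}: every discrete META `A` with a
distinguished location `lf` can be effectively extended to a discrete META `A'` such
that `A'` is δ-EN-opaque iff `lf` is reachable in `A`.  Hence reachability in discrete
METAs reduces to δ-EN-opacity. -/
theorem reachability_reduces_to_ENOpacity :
    ∀ δ : Var3, ∃ g : GMETA × ℕ → GMETA, Computable g ∧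
      ∀ (A : GMETA) (lf : ℕ),
        WellFormed A → Discrete A → ClockGuardsOnly A → lf < numLoc A →
        WellFormed (g (A, lf)) ∧ Discrete (g (A, lf)) ∧ ClockGuardsOnly (g (A, lf)) ∧
          (ENOpaque δ (g (A, lf)) ↔ ReachLoc A lf) := by
  intro δ
  refine ⟨fun p => build p.1 p.2, computable_build, ?_⟩
  intro A lf hWF hD hCG hlf
  exact ⟨wf_build hWF hlf, discrete_build hD, cgo_build hCG, enopaque_iff δ hWF hD hlf⟩

end METAOpacity
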